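/- Let A be a finite multiset of positive integers with |A| = n ≥ 2, let m₀ = max A, and let B be the multiset obtained from A by adding 2n new elements each equal to n²·m₀. Write S(M) for the sum of a multiset M. Then: (1) |B| = 3n; (2) there exists a sub-multiset A' of A with S(A') = S(A) − S(A') if and only if there exists a sub-multiset B' of B with S(B') = S(B) − S(B'); (3) every a ∈ A satisfies a/S(B) ≤ 1/(2n³); and (4) n²·m₀/S(B) ≤ 1/(2n). -/

import Mathlib

private lemma aux_lt (a s k n x : ℕ) (h2 : 2 * (a + k * x) = s + 2 * n * x)
    (hkk : k * x + x ≤ n * x) (hxA : s < x) (hs : a ≤ s) : False := by linarith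

private lemma aux_gt (a s k n x : ℕ) (h2 : 2 * (a + k * x) = s + 2 * n * x)
    (hkk : n * x + x ≤ k * x) (hxA : s < x) : False := by linarith

/-- Construction of the padded PARTITION instance `B` from `A`: adding `2n` copies of
`n²·m₀` (where `n = |A|` and `m₀ = max A`) gives an equivalent instance with `|B| = 3n`,
`a/S(B) ≤ 1/(2n³)` for `a ∈ A`, and `a/S(B) ≤ 1/(2n)` for the new elements. -/
theorem stmt_12 (A : Multiset ℕ) (hpos : ∀ a ∈ A, 0 < a)
    (n : ℕ) (hn : n = Multiset.card A) (hn2 : 2 ≤ n)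
    (m₀ : ℕ) (hm₀ : m₀ ∈ A ∧ ∀ a ∈ A, a ≤ m₀)
    (B : Multiset ℕ) (hB : B = A + Multiset.replicate (2 * n) (n ^ 2 * m₀)) :
    Multiset.card B = 3 * n ∧
    ((∃ A' ≤ A, A'.sum = A.sum - A'.sum) ↔ (∃ B' ≤ B, B'.sum = B.sum - B'.sum)) ∧
    (∀ a ∈ A, (a : ℝ) / (B.sum : ℝ) ≤ 1 / (2 * (n : ℝ) ^ 3)) ∧
    ((n ^ 2 * m₀ : ℕ) : ℝ) / (B.sum : ℝ) ≤ 1 / (2 * (n : ℝ)) := by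
  have hm0pos : 0 < m₀ := hpos m₀ hm₀.1
  have hSA : A.sum ≤ n * m₀ := by
    rw [hn]
    simpa using Multiset.sum_le_card_nsmul A m₀ hm₀.2
  have hBsum : B.sum = A.sum + 2 * n * (n ^ 2 * m₀) := by
    rw [hB, Multiset.sum_add, Multiset.sum_replicate, smul_eq_mul]
  have hrw : 2 * n * (n ^ 2 * m₀) = 2 * (n * (n ^ 2 * m₀)) := by ring
  have hSApos : 0 < A.sum := by
    have := Multiset.single_le_sum (fun a ha => (hpos a ha).le) m₀ hm₀.1
    omega
  have hnpos : 0 < n := by omega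
  have hx : n * m₀ < n ^ 2 * m₀ := by
    have h1 : n < n ^ 2 := by nlinarith
    exact (Nat.mul_lt_mul_right hm0pos).mpr h1
  have hxpos : 0 < n ^ 2 * m₀ := by positivity
  have hxA : A.sum < n ^ 2 * m₀ := lt_of_le_of_lt hSA hx
  refine ⟨?_, ?_, ?_, ?_⟩
  · rw [hB, Multiset.card_add, Multiset.card_replicate, ← hn]; ring
  · constructor
    · rintro ⟨A', hA'le, hA'⟩
      have hsplit : A.sum = A'.sum + (A - A').sum := by
        rw [← Multiset.sum_add, add_tsub_cancel_of_le hA'le]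
      refine ⟨A' + Multiset.replicate n (n ^ 2 * m₀), ?_, ?_⟩
      · rw [hB]
        exact add_le_add hA'le ((Multiset.replicate_le_replicate _).mpr (by omega))
      · rw [Multiset.sum_add, Multiset.sum_replicate, smul_eq_mul, hBsum]
        omega
    · rintro ⟨B', hB'le, hB'⟩
      set A' : Multiset ℕ := B' ∩ A with hA'def
      set R : Multiset ℕ := B' - A with hRdef
      have hA'le : A' ≤ A := Multiset.inter_le_right
      have hdecomp : B' = A' + R := by
        ext a
        simp only [hA'def, hRdef, Multiset.count_add, Multiset.count_inter,
          Multiset.count_sub]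
        omega
      have hRle : R ≤ Multiset.replicate (2 * n) (n ^ 2 * m₀) := by
        rw [hRdef, tsub_le_iff_right, add_comm, ← hB]; exact hB'le
      have hRrep : R = Multiset.replicate (Multiset.card R) (n ^ 2 * m₀) := by
        rw [Multiset.eq_replicate_card]
        exact fun b hb => Multiset.eq_of_mem_replicate (Multiset.mem_of_le hRle hb)
      set k := Multiset.card R with hk
      clear_value A' R k
      have hB'sum : B'.sum = A'.sum + k * (n ^ 2 * m₀) := by
        rw [hdecomp, Multiset.sum_add]
        conv_lhs => rw [hRrep]
        rw [Multiset.sum_replicate, smul_eq_mul]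
      have hA'sumle : A'.sum ≤ A.sum := by
        have : A.sum = A'.sum + (A - A').sum := by
          rw [← Multiset.sum_add, add_tsub_cancel_of_le hA'le]
        omega
      have hB'sumle : B'.sum ≤ B.sum := by
        have : B.sum = B'.sum + (B - B').sum := by
          rw [← Multiset.sum_add, add_tsub_cancel_of_le hB'le]
        omega
      have h2 : 2 * B'.sum = B.sum := by omega
      rw [hB'sum, hBsum] at h2
      have hk2 : k = n := by
        rcases Nat.lt_trichotomy k n with h | h | h
        · have hkk : (k + 1) * (n ^ 2 * m₀) ≤ n * (n ^ 2 * m₀) :=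
            Nat.mul_le_mul_right _ h
          rw [add_mul, one_mul] at hkk
          exact (aux_lt _ _ _ _ _ h2 hkk hxA hA'sumle).elim
        · exact h
        · have hkk : (n + 1) * (n ^ 2 * m₀) ≤ k * (n ^ 2 * m₀) :=
            Nat.mul_le_mul_right _ h
          rw [add_mul, one_mul] at hkk
          exact (aux_gt _ _ _ _ _ h2 hkk hxA).elim
      rw [hk2] at h2
      exact ⟨A', hA'le, by omega⟩
  · intro a ha
    have hSBpos : (0 : ℝ) < (B.sum : ℝ) := by
      have : 0 < B.sum := by omega
      exact_mod_cast this
    rw [div_le_div_iff₀ hSBpos (by positivity)]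
    have h1 : 2 * n ^ 3 * a ≤ B.sum := by
      have ham : a ≤ m₀ := hm₀.2 a ha
      have h3 : 2 * n ^ 3 * a ≤ 2 * n ^ 3 * m₀ := Nat.mul_le_mul le_rfl ham
      have h4 : 2 * n ^ 3 * m₀ = 2 * n * (n ^ 2 * m₀) := by ring
      omega
    calc (a : ℝ) * (2 * (n : ℝ) ^ 3) = ((2 * n ^ 3 * a : ℕ) : ℝ) := by push_cast; ring
      _ ≤ ((B.sum : ℕ) : ℝ) := by exact_mod_cast h1
      _ = 1 * (B.sum : ℝ) := by rw [one_mul]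
  · have hSBpos : (0 : ℝ) < (B.sum : ℝ) := by
      have : 0 < B.sum := by omega
      exact_mod_cast this
    rw [div_le_div_iff₀ hSBpos (by positivity)]
    have h1 : 2 * n * (n ^ 2 * m₀) ≤ B.sum := by omega
    calc ((n ^ 2 * m₀ : ℕ) : ℝ) * (2 * (n : ℝ)) = ((2 * n * (n ^ 2 * m₀) : ℕ) : ℝ) := by
          push_cast; ring
      _ ≤ ((B.sum : ℕ) : ℝ) := by exact_mod_cast h1
      _ = 1 * (B.sum : ℝ) := by rw [one_mul]
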